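/- arXiv:2010.10441 — 5 statements merged into one kernel-verified Lean document; each statement's English description precedes it below -/
import Mathlib

section
/- For an irrational real number r > 1 and an integer n, n belongs to the set P_r = {⌊m·r⌋ : m ∈ ℤ, m ≠ 0} if and only if the fractional part of n/r is strictly greater than 1 - 1/r. -/
def Pr (r : ℝ) : Set ℤ := {x | ∃ m : ℤ, m ≠ 0 ∧ x = ⌊(m : ℝ) * r⌋}

theorem mem_Pr_iff_fract (r : ℝ) (hr : Irrational r) (hr1 : 1 < r) (n : ℤ) :
    n ∈ Pr r ↔ Int.fract ((n : ℝ) / r) > 1 - 1 / r := by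
  have hr0 : (0:ℝ) < r := lt_trans one_pos hr1
  constructor
  · rintro ⟨m, hm, rfl⟩
    set x : ℝ := (m:ℝ) * r with hx
    have hmr : Irrational x := (hr.intCast_mul hm)
    have h1 : (⌊x⌋:ℝ) < x := (Int.floor_le x).lt_of_ne (Ne.symm (hmr.ne_int ⌊x⌋))
    have h2 : x - 1 < (⌊x⌋:ℝ) := Int.sub_one_lt_floor x
    -- ⌊x⌋ / r ∈ (m - 1/r, m), so its floor is m - 1
    have hb1 : ((m:ℝ) - 1) ≤ (⌊x⌋:ℝ) / r := by
      rw [le_div_iff₀ hr0]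
      nlinarith
    have hb2 : (⌊x⌋:ℝ) / r < (m:ℝ) := by
      rw [div_lt_iff₀ hr0]
      nlinarith
    have hfl : ⌊(⌊x⌋:ℝ) / r⌋ = m - 1 := by
      rw [Int.floor_eq_iff]
      constructor
      · push_cast; exact hb1
      · push_cast; linarith
    rw [Int.fract, hfl]
    push_cast
    have : (m:ℝ) - 1/r < (⌊x⌋:ℝ)/r := by
      rw [lt_div_iff₀ hr0]
      have : ((m:ℝ) - 1/r) * r = x - 1 := by field_simp; rw [hx]
      linarith [h2, this.le, this.ge]
    linarith
  · intro h
    set m : ℤ := ⌊(n:ℝ)/r⌋ + 1 with hm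
    have hfr : Int.fract ((n:ℝ)/r) = (n:ℝ)/r - ⌊(n:ℝ)/r⌋ := rfl
    have hlt1 : Int.fract ((n:ℝ)/r) < 1 := Int.fract_lt_one _
    have hub : (n:ℝ)/r < (m:ℝ) := by
      push_cast [hm]; rw [hfr] at hlt1; linarith
    have hlb : (m:ℝ) - 1/r < (n:ℝ)/r := by
      push_cast [hm]; rw [hfr] at h; linarith
    have hub' : (n:ℝ) < (m:ℝ) * r := by
      rw [div_lt_iff₀ hr0] at hub; linarith
    have hlb' : (m:ℝ) * r - 1 < (n:ℝ) := by
      rw [show (m:ℝ) - 1/r = ((m:ℝ)*r - 1)/r by field_simp, div_lt_div_iff₀ hr0 hr0] at hlb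
      nlinarith
    refine ⟨m, ?_, ?_⟩
    · intro hm0
      rw [hm0] at hub' hlb'
      push_cast at hub' hlb'
      have h1 : (-1:ℝ) < (n:ℝ) := by linarith
      have h2 : (n:ℝ) < 0 := by linarith
      have : (-1:ℤ) < n := by exact_mod_cast h1
      have : n < 0 := by exact_mod_cast h2
      omega
    · symm
      rw [Int.floor_eq_iff]
      constructor
      · exact hub'.le
      · push_cast; linarith
end

section
/- For an integer n and an irrational real r > 1, n ∈ P_r if and only if h(n) = exp(2πi·n/r) lies in the open counter-clockwise arc of the unit circle from exp(−2πi/r) to 1. -/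
open Complex

noncomputable def uexp (x : ℝ) : ℂ := Complex.exp (2 * Real.pi * Complex.I * x)

/-- The counter-clockwise orientation relation on the unit circle. -/
def Orient (α β γ : ℂ) : Prop :=
  ∃ x y z : ℝ, x < y ∧ y < z ∧ z - x < 1 ∧ α = uexp x ∧ β = uexp y ∧ γ = uexp z

/-- The open counter-clockwise arc from `α` to `β`. -/
def arc (α β : ℂ) : Set ℂ := {γ | Orient α γ β}

lemma uexp_eq_iff (a b : ℝ) : uexp a = uexp b ↔ ∃ k : ℤ, a - b = k := by
  unfold uexp
  rw [Complex.exp_eq_exp_iff_exists_int]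
  have h2 : (2 * Real.pi * Complex.I : ℂ) ≠ 0 := by
    simp [Real.pi_ne_zero, Complex.I_ne_zero]
  constructor
  · rintro ⟨k, hk⟩
    refine ⟨k, ?_⟩
    have : (2 * Real.pi * Complex.I : ℂ) * a = (2 * Real.pi * Complex.I) * (b + k) := by
      rw [hk]; ring
    have h3 : (a : ℂ) = (b : ℝ) + (k : ℤ) := mul_left_cancel₀ h2 this
    have : (a : ℝ) = b + k := by exact_mod_cast h3
    linarith
  · rintro ⟨k, hk⟩
    refine ⟨k, ?_⟩
    have : (a : ℝ) = b + k := by linarith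
    rw [this]
    push_cast
    ring

lemma uexp_zero : uexp 0 = 1 := by simp [uexp]

theorem mem_Pr_iff_arc (r : ℝ) (hr : Irrational r) (hr1 : 1 < r) (n : ℤ) :
    n ∈ Pr r ↔ uexp ((n : ℝ) / r) ∈ arc (uexp (-(1 / r))) 1 := by
  have hr0 : (0:ℝ) < r := lt_trans one_pos hr1
  constructor
  · rintro ⟨m, hm0, hn⟩
    have hirr : Irrational ((m:ℝ) * r) := by
      simpa using (hr.intCast_mul hm0)
    have h1 : (m:ℝ) * r - 1 < n := by
      rw [hn]; push_cast; exact Int.sub_one_lt_floor _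
    have h2 : (n:ℝ) < m * r := by
      have hle : (n:ℝ) ≤ m * r := by rw [hn]; push_cast; exact Int.floor_le _
      rcases lt_or_eq_of_le hle with h | h
      · exact h
      · exact absurd h.symm (hirr.ne_int n)
    have en : (n:ℝ)/r - m = ((n:ℝ) - m*r)/r := by field_simp
    refine ⟨-(1/r), (n:ℝ)/r - m, 0, ?_, ?_, ?_, rfl, ?_, uexp_zero.symm⟩
    · rw [en]
      rw [neg_lt, ← neg_div]
      exact div_lt_div_of_pos_right (by linarith) hr0
    · rw [en]
      exact div_neg_of_neg_of_pos (by linarith) hr0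
    · simp only [zero_sub, neg_neg]
      rw [div_lt_one hr0]; exact hr1
    · rw [uexp_eq_iff]
      exact ⟨m, by ring⟩
  · rintro ⟨x, y, z, hxy, hyz, hzx, hx, hy, hz⟩
    obtain ⟨j, hj⟩ := (uexp_eq_iff _ _).mp hx.symm   -- x - (-(1/r)) = j
    obtain ⟨t, ht⟩ := (uexp_eq_iff _ _).mp hy       -- n/r - y = t
    obtain ⟨k, hk⟩ := (uexp_eq_iff _ _).mp (uexp_zero.trans hz).symm  -- z - 0 = k
    have hx' : x = -(1/r) + j := by linarith
    have hy' : y = (n:ℝ)/r - t := by linarith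
    have hz' : z = k := by linarith
    have h1r : (0:ℝ) < 1/r := by positivity
    have h1r' : (1:ℝ)/r < 1 := by rw [div_lt_one hr0]; exact hr1
    -- k - j = 0
    have hkj : (k:ℝ) - j > -1 := by
      have := hxy.trans hyz  -- x < z
      rw [hx', hz'] at this
      linarith
    have hkj2 : (k:ℝ) - j < 1 := by
      rw [hx', hz'] at hzx
      linarith
    have hkj0 : k - j = 0 := by
      have a1 : (-1:ℤ) < k - j := by exact_mod_cast hkj
      have a2 : k - j < 1 := by exact_mod_cast hkj2
      omega
    have hjk : (k:ℝ) = j := by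
      have : k = j := by omega
      exact_mod_cast this
    set m : ℤ := t + j with hm
    have hlow : -(1/r) < (n:ℝ)/r - m := by
      rw [hx', hy'] at hxy
      have : ((m:ℤ):ℝ) = (t:ℝ) + j := by push_cast [hm]; ring
      rw [this]; linarith
    have hhigh : (n:ℝ)/r - m < 0 := by
      rw [hy', hz', hjk] at hyz
      have : ((m:ℤ):ℝ) = (t:ℝ) + j := by push_cast [hm]; ring
      rw [this]; linarith
    -- multiply by r
    have en : (n:ℝ)/r - m = ((n:ℝ) - m*r)/r := by field_simp
    rw [en] at hlow hhigh
    have hlow' : (-1:ℝ)/r < ((n:ℝ) - m*r)/r := by rw [neg_div]; exact hlow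
    have hA : (-1:ℝ) < (n:ℝ) - m*r := (div_lt_div_iff_of_pos_right hr0).mp hlow'
    have hB : (n:ℝ) - m*r < 0 := by
      by_contra h
      push_neg at h
      have : (0:ℝ) ≤ ((n:ℝ) - m*r)/r := div_nonneg h hr0.le
      linarith
    have hm0 : m ≠ 0 := by
      intro h
      rw [h] at hA hB
      push_cast at hA hB
      have a1 : (-1:ℤ) < n := by exact_mod_cast (by linarith : (-1:ℝ) < n)
      have a2 : n < 0 := by exact_mod_cast (by linarith : (n:ℝ) < 0)
      omega
    refine ⟨m, hm0, ?_⟩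
    have : ⌊(m:ℝ) * r⌋ = n := by
      rw [Int.floor_eq_iff]
      constructor
      · linarith
      · push_cast; linarith
    exact this.symm
end

section
/- Let (α_i, β_i) for i = 1,…,m be open orientation intervals on the unit circle with all endpoints α_1,…,α_m,β_1,…,β_m distinct. Then the intersection ⋂_{i=1}^m (α_i, β_i) is nonempty if and only if there exists an index i₀ such that α_{i₀} ∈ (α_i, β_i) for every i ≠ i₀. -/
lemma uexp_eq_iff_s10 (x y : ℝ) : uexp x = uexp y ↔ ∃ n : ℤ, x = y + n := by
  unfold uexp
  rw [Complex.exp_eq_exp_iff_exists_int]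
  constructor
  · rintro ⟨n, h⟩
    refine ⟨n, ?_⟩
    have hne : (2 * Real.pi * Complex.I : ℂ) ≠ 0 := by
      simp [Real.pi_ne_zero, Complex.I_ne_zero]
    have h2 : (2 * Real.pi * Complex.I : ℂ) * x = (2 * Real.pi * Complex.I) * (y + n) := by
      rw [h]; ring
    have := mul_left_cancel₀ hne h2
    exact_mod_cast this
  · rintro ⟨n, h⟩
    exact ⟨n, by rw [h]; push_cast; ring⟩

lemma uexp_int_shift (t : ℝ) (n : ℤ) : uexp (t + n) = uexp t :=
  (uexp_eq_iff_s10 _ _).2 ⟨n, rfl⟩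

lemma exists_uexp (z : ℂ) (hz : ‖z‖ = 1) : ∃ x : ℝ, z = uexp x := by
  refine ⟨z.arg / (2 * Real.pi), ?_⟩
  have h := Complex.norm_mul_exp_arg_mul_I z
  rw [hz] at h
  simp at h
  have key : uexp (z.arg / (2 * Real.pi)) = Complex.exp (z.arg * Complex.I) := by
    unfold uexp
    congr 1
    have hpi : (Real.pi : ℂ) ≠ 0 := by exact_mod_cast Real.pi_ne_zero
    push_cast
    field_simp
  rw [key, h]

theorem intersection_of_arcs (m : ℕ) (hm : 0 < m) (α β : Fin m → ℂ)
    (hα : ∀ i, ‖α i‖ = 1) (hβ : ∀ i, ‖β i‖ = 1)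
    (hdist : ∀ i j, α i = α j → i = j) (hdist' : ∀ i j, β i = β j → i = j)
    (hdist'' : ∀ i j, α i ≠ β j) :
    (⋂ i, arc (α i) (β i)).Nonempty ↔
      ∃ i₀, ∀ i, i ≠ i₀ → α i₀ ∈ arc (α i) (β i) := by
  constructor
  · rintro ⟨γ, hγ⟩
    simp only [Set.mem_iInter] at hγ
    choose x y z hxy hyz hzx hax hgy hbz using hγ
    have hint : ∀ i j : Fin m, ∃ n : ℤ, y i = y j + n := by
      intro i j
      exact (uexp_eq_iff_s10 _ _).1 ((hgy i).symm.trans (hgy j))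
    obtain ⟨i₀, -, hmax⟩ := Finset.exists_max_image Finset.univ
      (fun i => x i - y i) ⟨⟨0, hm⟩, Finset.mem_univ _⟩
    refine ⟨i₀, fun i hi => ?_⟩
    obtain ⟨n, hn⟩ := hint i i₀
    have hαi₀ : α i₀ = uexp (x i₀ - y i₀ + y i) := by
      have he : x i₀ - y i₀ + y i = x i₀ + (n : ℝ) := by rw [hn]; ring
      rw [he, uexp_int_shift]; exact hax i₀
    have hlt : x i - y i < x i₀ - y i₀ := by
      rcases lt_or_eq_of_le (hmax i (Finset.mem_univ i)) with h | h
      · exact h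
      · exfalso
        apply hi
        apply hdist
        have he : x i = x i₀ + (n : ℝ) := by
          have := hn; linarith
        rw [hax i, hax i₀, he, uexp_int_shift]
    exact ⟨x i, x i₀ - y i₀ + y i, z i, by linarith,
      by linarith [hxy i₀, hyz i], hzx i, hax i, hαi₀, hbz i⟩
  · rintro ⟨i₀, h⟩
    choose xx yy zz hxy hyz hzx hax hay hbz using h
    obtain ⟨p, hp⟩ := exists_uexp (α i₀) (hα i₀)
    obtain ⟨q, hq⟩ := exists_uexp (β i₀) (hβ i₀)
    set b₀ : ℝ := Int.fract (q - p) with hb₀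
    have hbdef : b₀ = (q - p) - ⌊q - p⌋ := rfl
    have hb₀q : β i₀ = uexp (p + b₀) := by
      have hqeq : q = (p + b₀) + (⌊q - p⌋ : ℝ) := by rw [hbdef]; ring
      rw [hq, hqeq, uexp_int_shift]
    have hb₀pos : 0 < b₀ := by
      rcases lt_or_eq_of_le (Int.fract_nonneg (q - p)) with h0 | h0
      · exact h0
      · exfalso
        apply hdist'' i₀ i₀
        rw [hp, hb₀q, hb₀, ← h0, add_zero]
    have hb₀lt : b₀ < 1 := Int.fract_lt_one _
    set b : Fin m → ℝ := fun i => if h : i = i₀ then b₀ else zz i h - yy i h with hb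
    have hbpos : ∀ i, 0 < b i := by
      intro i
      rw [hb]
      dsimp only
      split_ifs with h'
      · exact hb₀pos
      · linarith [hyz i h']
    have hblt1 : ∀ i, b i < 1 := by
      intro i
      rw [hb]
      dsimp only
      split_ifs with h'
      · exact hb₀lt
      · linarith [hzx i h', hxy i h']
    set T : ℝ := Finset.univ.inf' ⟨i₀, Finset.mem_univ i₀⟩ b with hT
    have hTpos : 0 < T := by
      rw [hT]; refine (Finset.lt_inf'_iff _).2 ?_
      exact fun i _ => hbpos i
    have hTle : ∀ i, T ≤ b i := fun i => Finset.inf'_le _ (Finset.mem_univ i)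
    refine ⟨uexp (p + T / 2), Set.mem_iInter.2 fun i => ?_⟩
    by_cases hi : i = i₀
    · subst hi
      have hbi : b i = b₀ := by rw [hb]; exact dif_pos rfl
      refine ⟨p, p + T / 2, p + b₀, by linarith, ?_, by linarith, hp, rfl, hb₀q⟩
      have := hTle i
      rw [hbi] at this
      linarith
    · obtain ⟨n, hn⟩ := (uexp_eq_iff_s10 p (yy i hi)).1 (hp.symm.trans (hay i hi))
      have hbi : b i = zz i hi - yy i hi := by rw [hb]; exact dif_neg hi
      have hTb := hTle i
      rw [hbi] at hTb
      have hA : α i = uexp (xx i hi - yy i hi + p) := by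
        have he : xx i hi - yy i hi + p = xx i hi + (n : ℝ) := by rw [hn]; ring
        rw [he, uexp_int_shift]; exact hax i hi
      have hB : β i = uexp (zz i hi - yy i hi + p) := by
        have he : zz i hi - yy i hi + p = zz i hi + (n : ℝ) := by rw [hn]; ring
        rw [he, uexp_int_shift]; exact hbz i hi
      refine ⟨xx i hi - yy i hi + p, p + T / 2, zz i hi - yy i hi + p,
        by linarith [hxy i hi], ?_, by linarith [hzx i hi], hA, rfl, hB⟩
      have := hbpos i
      rw [hbi] at this
      linarith
end

section
/- Let r > 1 be irrational. For every positive integer n there exists a positive integer m such that m, 2m, …, n·m all belong to P_r while −m, −2m, …, −n·m all do not belong to P_r. -/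
/-- From a positive multiple with small positive fractional part we can get one with
fractional part close to 1. -/
lemma small_to_large {θ ε : ℝ} (hε1 : ε < 1) (k : ℤ) (hk : 0 < k)
    (h0 : 0 < Int.fract ((k : ℝ) * θ)) (hη : Int.fract ((k : ℝ) * θ) < ε) :
    ∃ m : ℤ, 0 < m ∧ 1 - ε < Int.fract ((m : ℝ) * θ) := by
  set η := Int.fract ((k : ℝ) * θ) with hηdef
  set j : ℤ := ⌊(1 - ε) / η⌋ + 1 with hj
  have hj1 : 1 ≤ j := by
    have h01 : (0 : ℤ) ≤ ⌊(1 - ε) / η⌋ :=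
      Int.floor_nonneg.2 (div_nonneg (by linarith) h0.le)
    omega
  have hjgt : (1 - ε) / η < (j : ℝ) := by
    rw [hj]; push_cast; exact Int.lt_floor_add_one _
  have hjle : (j : ℝ) ≤ (1 - ε) / η + 1 := by
    rw [hj]; push_cast
    have := Int.floor_le ((1 - ε) / η)
    linarith
  have hlow : 1 - ε < (j : ℝ) * η := by
    have := (div_lt_iff₀ h0).mp hjgt
    linarith
  have hhigh : (j : ℝ) * η < 1 := by
    have h1 : (j : ℝ) * η ≤ ((1 - ε) / η + 1) * η :=
      mul_le_mul_of_nonneg_right hjle h0.le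
    have h2 : ((1 - ε) / η + 1) * η = (1 - ε) + η := by
      field_simp
    nlinarith
  refine ⟨j * k, mul_pos (by exact_mod_cast hj1) hk, ?_⟩
  have hkey : ((j * k : ℤ) : ℝ) * θ = ((j * ⌊(k : ℝ) * θ⌋ : ℤ) : ℝ) + (j : ℝ) * η := by
    have : η = (k : ℝ) * θ - ⌊(k : ℝ) * θ⌋ := (Int.self_sub_floor _).symm
    rw [this]; push_cast; ring
  rw [hkey, Int.fract_intCast_add, Int.fract_eq_self.2 ⟨by linarith [hlow, hε1], hhigh⟩]
  exact hlow

/-- For irrational `θ`, there are positive integer multiples with fractional part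
arbitrarily close to 1. -/
lemma exists_fract_large {θ : ℝ} (hθ : Irrational θ) {ε : ℝ} (hε : 0 < ε) (hε1 : ε < 1) :
    ∃ m : ℤ, 0 < m ∧ 1 - ε < Int.fract ((m : ℝ) * θ) := by
  set S : AddSubgroup ℝ := AddSubgroup.closure ({1, θ} : Set ℝ) with hS
  rcases S.dense_or_cyclic with hd | ⟨a, ha⟩
  · -- dense case
    obtain ⟨s, hsS, hs1, hs2⟩ := hd.exists_between (show (1 - ε : ℝ) < 1 by linarith)
    have hdecomp : ∀ x ∈ S, ∃ p q : ℤ, x = (p : ℝ) + (q : ℝ) * θ := by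
      intro x hx
      refine AddSubgroup.closure_induction ?_ ?_ ?_ ?_ hx
      · rintro y (rfl | rfl)
        · exact ⟨1, 0, by norm_num⟩
        · exact ⟨0, 1, by norm_num⟩
      · exact ⟨0, 0, by norm_num⟩
      · rintro y z _ _ ⟨p1, q1, rfl⟩ ⟨p2, q2, rfl⟩
        exact ⟨p1 + p2, q1 + q2, by push_cast; ring⟩
      · rintro y _ ⟨p, q, rfl⟩
        exact ⟨-p, -q, by push_cast; ring⟩
    obtain ⟨p, q, rfl⟩ := hdecomp s hsS
    have hs0 : (0 : ℝ) < (p : ℝ) + (q : ℝ) * θ := by linarith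
    have hq : q ≠ 0 := by
      rintro rfl
      simp only [Int.cast_zero, zero_mul, add_zero] at hs0 hs2
      have h1 : (0 : ℤ) < p := by exact_mod_cast hs0
      have h2 : (p : ℤ) < 1 := by exact_mod_cast hs2
      omega
    rcases hq.lt_or_gt with hqneg | hqpos
    · -- q < 0 : fract((-q)θ) = 1 - s, small
      have hfr : Int.fract (((-q : ℤ) : ℝ) * θ) = 1 - ((p : ℝ) + (q : ℝ) * θ) := by
        have h1 : ((-q : ℤ) : ℝ) * θ = ((p : ℤ) : ℝ) + -((p : ℝ) + (q : ℝ) * θ) := by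
          push_cast; ring
        rw [h1, Int.fract_intCast_add, Int.fract_neg, Int.fract_eq_self.2 ⟨hs0.le, hs2⟩]
        rw [Int.fract_eq_self.2 ⟨hs0.le, hs2⟩]
        exact hs0.ne'
      refine small_to_large hε1 (-q) (by omega) ?_ ?_
      · rw [hfr]; linarith
      · rw [hfr]; linarith
    · -- q > 0 : fract(qθ) = s already large
      refine ⟨q, hqpos, ?_⟩
      have h1 : ((q : ℤ) : ℝ) * θ = ((-p : ℤ) : ℝ) + ((p : ℝ) + (q : ℝ) * θ) := by
        push_cast; ring
      have h2 : Int.fract ((q : ℝ) * θ) = (p : ℝ) + (q : ℝ) * θ := by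
        rw [h1, Int.fract_intCast_add, Int.fract_eq_self.2 ⟨hs0.le, hs2⟩]
        push_cast; ring
      rw [h2]; exact hs1
  · -- cyclic case is impossible
    exfalso
    have h1 : (1 : ℝ) ∈ S := AddSubgroup.subset_closure (by simp)
    have hθS : θ ∈ S := AddSubgroup.subset_closure (by simp)
    rw [ha] at h1 hθS
    obtain ⟨nz, hnz⟩ := AddSubgroup.mem_closure_singleton.1 h1
    obtain ⟨pz, hpz⟩ := AddSubgroup.mem_closure_singleton.1 hθS
    have hnz0 : nz ≠ 0 := by
      rintro rfl
      rw [zero_zsmul] at hnz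
      exact one_ne_zero hnz.symm
    have hza : (pz : ℝ) * a = θ := by rw [← zsmul_eq_mul]; exact hpz
    have hna : (nz : ℝ) * a = 1 := by rw [← zsmul_eq_mul]; exact hnz
    have key : (nz : ℝ) * θ = (pz : ℝ) := by
      have hc : (nz : ℝ) * ((pz : ℝ) * a) = (pz : ℝ) * ((nz : ℝ) * a) := by ring
      rw [← hza, hc, hna, mul_one]
    exact (hθ.intCast_mul hnz0).ne_int pz key

lemma mem_Pr_of_fract {r : ℝ} (hr1 : 1 < r) {x : ℤ} (hx : 0 < x)
    (hf : 1 - r⁻¹ < Int.fract ((x : ℝ) * r⁻¹)) : x ∈ Pr r := by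
  have hr0 : (0 : ℝ) < r := lt_trans one_pos hr1
  set f := Int.fract ((x : ℝ) * r⁻¹) with hfdef
  have hf1 : f < 1 := Int.fract_lt_one _
  refine ⟨⌊(x : ℝ) * r⁻¹⌋ + 1, ?_, ?_⟩
  · have : (0 : ℝ) ≤ (x : ℝ) * r⁻¹ := by positivity
    have := Int.floor_nonneg.2 this
    omega
  · have hval : ((⌊(x : ℝ) * r⁻¹⌋ + 1 : ℤ) : ℝ) * r = (x : ℝ) + (1 - f) * r := by
      have h1 : (⌊(x : ℝ) * r⁻¹⌋ : ℝ) = (x : ℝ) * r⁻¹ - f := by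
        rw [hfdef, ← Int.self_sub_floor]; ring
      push_cast
      rw [h1]
      field_simp
      ring
    symm
    rw [Int.floor_eq_iff]
    constructor
    · rw [hval]; nlinarith
    · rw [hval]
      have h2 : (1 - f) * r < r⁻¹ * r := by
        apply mul_lt_mul_of_pos_right _ hr0
        linarith
      rw [inv_mul_cancel₀ hr0.ne'] at h2
      push_cast
      linarith

lemma neg_not_mem_Pr_of_fract {r : ℝ} (hr : Irrational r) (hr1 : 1 < r) {x : ℤ} (hx : 0 < x)
    (hf : r⁻¹ ≤ Int.fract ((x : ℝ) * r⁻¹)) : -x ∉ Pr r := by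
  have hr0 : (0 : ℝ) < r := lt_trans one_pos hr1
  rintro ⟨w, hw0, hwx⟩
  have hfloor : ⌊(w : ℝ) * r⌋ = -x := hwx.symm
  rw [Int.floor_eq_iff] at hfloor
  obtain ⟨hlo, hhi⟩ := hfloor
  push_cast at hlo hhi
  -- w must be negative
  have hwneg : w < 0 := by
    by_contra h
    push_neg at h
    have hw1 : (1 : ℤ) ≤ w := by omega
    have : (1 : ℝ) ≤ (w : ℝ) := by exact_mod_cast hw1
    have hx1 : (1 : ℝ) ≤ (x : ℝ) := by exact_mod_cast hx
    nlinarith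
  set j : ℤ := -w with hjdef
  have hj0 : 0 < j := by omega
  have hjr_le : (j : ℝ) * r ≤ (x : ℝ) := by
    have : ((j : ℝ)) = -(w : ℝ) := by push_cast [hjdef]; ring
    rw [this]; linarith
  have hjr_ne : (j : ℝ) * r ≠ (x : ℝ) := (hr.intCast_mul hj0.ne').ne_int x
  have hjr_lt : (j : ℝ) * r < (x : ℝ) := lt_of_le_of_ne hjr_le hjr_ne
  have hjr_gt : (x : ℝ) - 1 < (j : ℝ) * r := by
    have : ((j : ℝ)) = -(w : ℝ) := by push_cast [hjdef]; ring
    rw [this]; linarith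
  -- so (x-1)/r < j < x/r
  have hj_lt : (j : ℝ) < (x : ℝ) * r⁻¹ := by
    rw [mul_comm]
    exact (lt_div_iff₀ hr0).2 hjr_lt |>.trans_eq (div_eq_inv_mul _ _)
  have hj_gt : ((x : ℝ) - 1) * r⁻¹ < (j : ℝ) := by
    rw [mul_comm]
    exact (div_lt_iff₀ hr0).2 hjr_gt |>.trans_eq' (div_eq_inv_mul _ _)
  have hj_le_floor : j ≤ ⌊(x : ℝ) * r⁻¹⌋ := Int.le_floor.2 hj_lt.le
  have hfr : Int.fract ((x : ℝ) * r⁻¹) = (x : ℝ) * r⁻¹ - ⌊(x : ℝ) * r⁻¹⌋ :=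
    (Int.self_sub_floor _).symm
  have hcast : (j : ℝ) ≤ (⌊(x : ℝ) * r⁻¹⌋ : ℝ) := by exact_mod_cast hj_le_floor
  have : Int.fract ((x : ℝ) * r⁻¹) < r⁻¹ := by
    rw [hfr]
    have expand : (x : ℝ) * r⁻¹ - ((x : ℝ) - 1) * r⁻¹ = r⁻¹ := by ring
    nlinarith
  linarith

theorem multiples_in_Pr (r : ℝ) (hr : Irrational r) (hr1 : 1 < r) (n : ℕ) (hn : 0 < n) :
    ∃ m : ℤ, 0 < m ∧ ∀ i : ℤ, 1 ≤ i → i ≤ n → i * m ∈ Pr r ∧ -(i * m) ∉ Pr r := by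
  have hr0 : (0 : ℝ) < r := lt_trans one_pos hr1
  set θ : ℝ := r⁻¹ with hθdef
  have hθ : Irrational θ := hr.inv
  have hθ0 : 0 < θ := inv_pos.2 hr0
  have hθ1 : θ < 1 := by
    rw [hθdef]
    exact inv_lt_one_of_one_lt₀ hr1
  set c : ℝ := max (1 - θ) θ with hcdef
  have hc0 : 0 < c := lt_of_lt_of_le hθ0 (le_max_right _ _)
  have hc1 : c < 1 := max_lt (by linarith) hθ1
  set ε : ℝ := (1 - c) / n with hεdef
  have hn1 : (1 : ℝ) ≤ (n : ℝ) := by exact_mod_cast hn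
  have hε0 : 0 < ε := div_pos (by linarith) (by linarith)
  have hεn : (n : ℝ) * ε = 1 - c := by
    rw [hεdef]; field_simp
  have hε1 : ε < 1 := by
    have : ε ≤ 1 - c := by
      rw [hεdef]
      exact div_le_of_le_mul₀ (by linarith) (by linarith) (by nlinarith)
    linarith
  obtain ⟨m, hm0, hmf⟩ := exists_fract_large hθ hε0 hε1
  set f := Int.fract ((m : ℝ) * θ) with hfdef
  have hf1 : f < 1 := Int.fract_lt_one _
  refine ⟨m, hm0, fun i hi1 hin => ?_⟩
  have him : 0 < i * m := mul_pos (by omega) hm0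
  have hi1R : (1 : ℝ) ≤ (i : ℝ) := by exact_mod_cast hi1
  have hinR : (i : ℝ) ≤ (n : ℝ) := by exact_mod_cast hin
  -- compute the fractional part of (i*m)θ
  have hkey : ((i * m : ℤ) : ℝ) * θ = ((i * ⌊(m : ℝ) * θ⌋ : ℤ) : ℝ) + (i : ℝ) * f := by
    have : f = (m : ℝ) * θ - ⌊(m : ℝ) * θ⌋ := (Int.self_sub_floor _).symm
    rw [this]; push_cast; ring
  have hiε : (i : ℝ) * ε ≤ 1 - c := by
    calc (i : ℝ) * ε ≤ (n : ℝ) * ε := mul_le_mul_of_nonneg_right hinR hε0.le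
      _ = 1 - c := hεn
  have hlow : (i : ℝ) - 1 + c < (i : ℝ) * f := by nlinarith
  have hhigh : (i : ℝ) * f < (i : ℝ) := by nlinarith
  have hfract : Int.fract (((i * m : ℤ) : ℝ) * θ) = (i : ℝ) * f - ((i : ℝ) - 1) := by
    rw [hkey, Int.fract_intCast_add]
    have h1 : (i : ℝ) * f = ((i - 1 : ℤ) : ℝ) + ((i : ℝ) * f - ((i : ℝ) - 1)) := by
      push_cast; ring
    rw [h1, Int.fract_intCast_add, Int.fract_eq_self.2 ⟨by linarith, by linarith⟩]
    push_cast; ring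
  have hcf : c < Int.fract (((i * m : ℤ) : ℝ) * θ) := by
    rw [hfract]; linarith
  constructor
  · exact mem_Pr_of_fract hr1 him (by
      have : 1 - θ ≤ c := le_max_left _ _
      rw [← hθdef]
      linarith)
  · exact neg_not_mem_Pr_of_fract hr hr1 him (by
      have : θ ≤ c := le_max_right _ _
      rw [← hθdef]
      linarith)
end

section
/- Let r > 1 be irrational. The formula φ(x, y) := (y − x ∈ P_r) has the order property over ℤ: for every n > 0 there exist integers a_1, …, a_n such that a_j − a_i ∈ P_r if and only if i < j. -/
private lemma close_pair (r : ℝ) (hr : Irrational r) {ε : ℝ} (hε : 0 < ε) :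
    ∃ p q : ℕ, 0 < q ∧ q < p ∧ |Int.fract ((p : ℝ) * r) - Int.fract ((q : ℝ) * r)| < ε := by
  set M : ℕ := ⌈ε⁻¹⌉₊ with hM
  have hM0 : 0 < M := Nat.ceil_pos.2 (by positivity)
  have hMε : ε⁻¹ ≤ (M : ℝ) := Nat.le_ceil _
  have hinv : (M : ℝ)⁻¹ ≤ ε := by
    rw [inv_le_comm₀ (by exact_mod_cast hM0) hε]
    exact hMε
  have hbound : ∀ k : ℕ, ⌊Int.fract (((k : ℕ) : ℝ) * r) * M⌋₊ < M := by
    intro k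
    have h1 : Int.fract (((k : ℕ) : ℝ) * r) * M < M := by
      have := Int.fract_lt_one (((k : ℕ) : ℝ) * r)
      nlinarith [Int.fract_nonneg (((k : ℕ) : ℝ) * r), (show (0:ℝ) < M by exact_mod_cast hM0)]
    have h0 : 0 ≤ Int.fract (((k : ℕ) : ℝ) * r) * M := by
      exact mul_nonneg (Int.fract_nonneg _) (Nat.cast_nonneg _)
    exact_mod_cast (Nat.floor_lt h0).2 h1
  set f : Fin (M + 1) → Fin M := fun k => ⟨⌊Int.fract (((k + 1 : ℕ) : ℝ) * r) * M⌋₊, hbound _⟩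
  obtain ⟨x, y, hxy, hfeq⟩ := Fintype.exists_ne_map_eq_of_card_lt f (by simp)
  have key : ∀ u v : ℕ, ⌊Int.fract ((u : ℝ) * r) * M⌋₊ = ⌊Int.fract ((v : ℝ) * r) * M⌋₊ →
      Int.fract ((u : ℝ) * r) - Int.fract ((v : ℝ) * r) < ε := by
    intro u v huv
    set A := Int.fract ((u : ℝ) * r) * M with hA
    set B := Int.fract ((v : ℝ) * r) * M with hB
    have hAB : A - B < 1 := by
      have h1 : A < ⌊A⌋₊ + 1 := Nat.lt_floor_add_one A
      have h2 : (⌊B⌋₊ : ℝ) ≤ B := Nat.floor_le (mul_nonneg (Int.fract_nonneg _) (Nat.cast_nonneg _))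
      rw [huv] at h1
      linarith
    have hMpos : (0:ℝ) < M := by exact_mod_cast hM0
    have : (Int.fract ((u : ℝ) * r) - Int.fract ((v : ℝ) * r)) * M < 1 := by
      rw [sub_mul]; exact hAB
    have h3 : Int.fract ((u : ℝ) * r) - Int.fract ((v : ℝ) * r) < (M:ℝ)⁻¹ := by
      rw [← lt_div_iff₀ hMpos] at this
      simpa [one_div] using this
    linarith
  have hfeq' : ⌊Int.fract (((x + 1 : ℕ) : ℝ) * r) * M⌋₊ = ⌊Int.fract (((y + 1 : ℕ) : ℝ) * r) * M⌋₊ := by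
    have := congrArg Fin.val hfeq
    simpa [f] using this
  rcases lt_or_gt_of_ne (fun h : (x : ℕ) = (y : ℕ) => hxy (Fin.ext h)) with h | h
  · exact ⟨(y : ℕ) + 1, (x : ℕ) + 1, Nat.succ_pos _, by omega,
      abs_sub_lt_iff.2 ⟨key _ _ hfeq'.symm, key _ _ hfeq'⟩⟩
  · exact ⟨(x : ℕ) + 1, (y : ℕ) + 1, Nat.succ_pos _, by omega,
      abs_sub_lt_iff.2 ⟨key _ _ hfeq', key _ _ hfeq'.symm⟩⟩

private lemma exists_small_fract (r : ℝ) (hr : Irrational r) {ε : ℝ} (hε : 0 < ε)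
    (hε1 : ε < 1) : ∃ N : ℕ, 0 < N ∧ Int.fract ((N : ℝ) * r) < ε := by
  obtain ⟨p, q, hq0, hqp, habs⟩ := close_pair r hr hε
  set t : ℝ := Int.fract ((p : ℝ) * r) - Int.fract ((q : ℝ) * r) with ht
  have htlt : |t| < ε := habs
  have htne : t ≠ 0 := by
    intro h0
    have hfr : Int.fract ((p : ℝ) * r) = Int.fract ((q : ℝ) * r) := by
      have := sub_eq_zero.1 h0; exact this
    obtain ⟨z, hz⟩ := Int.fract_eq_fract.1 hfr
    have hne : (p : ℤ) - q ≠ 0 := by omega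
    have hirr : Irrational ((((p : ℤ) - q : ℤ) : ℝ) * r) := hr.intCast_mul hne
    apply hirr.ne_int z
    push_cast
    linarith
  set N₁ : ℕ := p - q with hN₁
  have hN₁0 : 0 < N₁ := by omega
  have hN₁c : ((N₁ : ℕ) : ℝ) = (p : ℝ) - q := by
    push_cast [hN₁, Nat.cast_sub hqp.le]; ring
  have hfr_eq : Int.fract ((N₁ : ℝ) * r) = Int.fract t := by
    apply Int.fract_eq_fract.2
    refine ⟨⌊(p : ℝ) * r⌋ - ⌊(q : ℝ) * r⌋, ?_⟩
    rw [hN₁c, ht]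
    have h1 : Int.fract ((p : ℝ) * r) = (p : ℝ) * r - ⌊(p : ℝ) * r⌋ := rfl
    have h2 : Int.fract ((q : ℝ) * r) = (q : ℝ) * r - ⌊(q : ℝ) * r⌋ := rfl
    push_cast
    rw [h1, h2]; ring
  rcases lt_or_gt_of_ne htne with hneg | hpos
  · -- t < 0, fract t = 1 + t
    have hfr1 : Int.fract ((N₁ : ℝ) * r) = 1 + t := by
      rw [hfr_eq, Int.fract_eq_iff]
      have := abs_lt.1 htlt
      exact ⟨by linarith, by linarith, ⟨-1, by push_cast; ring⟩⟩
    set h : ℝ := -t with hh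
    have hh0 : 0 < h := by simp [hh]; linarith
    have hhε : h < ε := by have := abs_lt.1 htlt; simp [hh]; linarith
    have hirrN₁ : Irrational ((N₁ : ℝ) * r) := hr.natCast_mul (by omega)
    have hirrh : Irrational h := by
      have h1 : Irrational (Int.fract ((N₁ : ℝ) * r)) := by
        have h2 := hirrN₁.sub_intCast ⌊(N₁ : ℝ) * r⌋
        have h3 : Int.fract ((N₁ : ℝ) * r) = (N₁ : ℝ) * r - ⌊(N₁ : ℝ) * r⌋ := rfl
        rw [h3]; exact h2
      rw [hfr1] at h1
      have := (h1.intCast_sub 1)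
      simpa [hh] using (by simpa using this : Irrational (1 - (1 + t)))
    set k : ℕ := ⌊h⁻¹⌋₊ with hk
    have hk1 : 1 ≤ k := by
      apply Nat.le_floor
      rw [Nat.cast_one, le_inv_comm₀ (by norm_num) hh0]
      linarith
    have hkh_le : (k : ℝ) * h ≤ 1 := by
      have := Nat.floor_le (le_of_lt (inv_pos.2 hh0))
      calc (k : ℝ) * h ≤ h⁻¹ * h := by nlinarith
        _ = 1 := by field_simp
    have hkh_ne : (k : ℝ) * h ≠ 1 := by
      have : Irrational ((k : ℝ) * h) := hirrh.natCast_mul (by omega)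
      intro h1
      exact this.ne_int 1 (by rw [h1]; norm_num)
    have hkh_lt : (k : ℝ) * h < 1 := lt_of_le_of_ne hkh_le hkh_ne
    have hlow : 1 < (k : ℝ) * h + h := by
      have h2 : h⁻¹ < (k : ℝ) + 1 := Nat.lt_floor_add_one h⁻¹
      have := mul_lt_mul_of_pos_right h2 hh0
      rw [inv_mul_cancel₀ (ne_of_gt hh0)] at this
      nlinarith
    refine ⟨k * N₁, by positivity, ?_⟩
    have hfrN : Int.fract (((k * N₁ : ℕ) : ℝ) * r) = 1 - (k : ℝ) * h := by
      rw [Int.fract_eq_iff]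
      refine ⟨by linarith, by nlinarith [hh0, (show (0:ℝ) < k by exact_mod_cast hk1)],
        ⟨(k : ℤ) * (⌊(N₁ : ℝ) * r⌋ + 1) - 1, ?_⟩⟩
      have hN₁r : (N₁ : ℝ) * r = ⌊(N₁ : ℝ) * r⌋ + (1 + t) := by
        have : Int.fract ((N₁ : ℝ) * r) = (N₁ : ℝ) * r - ⌊(N₁ : ℝ) * r⌋ := rfl
        rw [this] at hfr1; linarith
      push_cast
      rw [hh]
      nlinarith [hN₁r]
    rw [hfrN]
    linarith
  · -- t > 0
    have : Int.fract ((N₁ : ℝ) * r) = t := by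
      rw [hfr_eq, Int.fract_eq_self]
      have := abs_lt.1 htlt
      exact ⟨le_of_lt hpos, by linarith⟩
    exact ⟨N₁, hN₁0, by rw [this]; exact (abs_lt.1 htlt).2⟩

set_option maxHeartbeats 1000000 in
theorem Pr_order_property (r : ℝ) (hr : Irrational r) (hr1 : 1 < r) (n : ℕ) (hn : 0 < n) :
    ∃ a : Fin n → ℤ, ∀ i j : Fin n, (a j - a i ∈ Pr r ↔ i < j) := by
  have hfr0 : 0 < Int.fract r := Int.fract_pos.2 (hr.ne_int ⌊r⌋)
  have hfr1 : Int.fract r < 1 := Int.fract_lt_one r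
  have hn' : (0:ℝ) < n := by exact_mod_cast hn
  set ε : ℝ := Int.fract r / n with hε_def
  have hε : 0 < ε := by positivity
  have hε1 : ε < 1 := by
    have : ε ≤ Int.fract r := by
      rw [hε_def]
      apply div_le_self (le_of_lt hfr0)
      exact_mod_cast hn
    linarith
  obtain ⟨N, hN0, hNε⟩ := exists_small_fract r hr hε hε1
  set g : ℝ := Int.fract ((N : ℝ) * r) with hg_def
  have hirrN : Irrational ((N : ℝ) * r) := hr.natCast_mul (by omega)
  have hg0 : 0 < g := Int.fract_pos.2 (hirrN.ne_int ⌊(N : ℝ) * r⌋)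
  have hr0 : (0:ℝ) < r := by linarith
  -- key fract computation
  have hfract : ∀ k : ℤ, 1 ≤ k → k ≤ n → Int.fract ((k : ℝ) * N * r) = k * g := by
    intro k hk1 hkn
    have hkr : (1:ℝ) ≤ (k:ℝ) := by exact_mod_cast hk1
    have hknr : (k:ℝ) ≤ n := by exact_mod_cast hkn
    rw [Int.fract_eq_iff]
    refine ⟨by positivity, ?_, ⟨k * ⌊(N : ℝ) * r⌋, ?_⟩⟩
    · have h1 : (k:ℝ) * g ≤ n * g := by nlinarith
      have h2 : (n:ℝ) * g < n * ε := by nlinarith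
      have h3 : (n:ℝ) * ε = Int.fract r := by
        rw [hε_def]; field_simp
      linarith
    · have hNg : g = (N : ℝ) * r - ⌊(N : ℝ) * r⌋ := rfl
      push_cast
      rw [hNg]; ring
  have hgltfr : ∀ k : ℤ, 1 ≤ k → k ≤ n → (k:ℝ) * g < Int.fract r := by
    intro k hk1 hkn
    have hknr : (k:ℝ) ≤ n := by exact_mod_cast hkn
    have h3 : (n:ℝ) * ε = Int.fract r := by rw [hε_def]; field_simp
    nlinarith
  set a : Fin n → ℤ := fun i => ⌊((((i : ℤ) + 1) * N : ℤ) : ℝ) * r⌋ with ha_def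
  have hbnd : ∀ i : Fin n, 1 ≤ (i : ℤ) + 1 ∧ (i : ℤ) + 1 ≤ n := by
    intro i
    have := i.isLt
    omega
  have ha : ∀ i : Fin n, ((a i : ℝ)) = ((i : ℤ) + 1) * N * r - ((i : ℤ) + 1) * g := by
    intro i
    have h1 := hfract ((i : ℤ) + 1) (hbnd i).1 (hbnd i).2
    have h2 : Int.fract ((((i : ℤ) + 1):ℝ) * N * r) = ((((i : ℤ) + 1) * N : ℤ) : ℝ) * r - ⌊((((i : ℤ) + 1) * N : ℤ) : ℝ) * r⌋ := by
      push_cast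
      rfl
    rw [ha_def]
    simp only
    push_cast at h1 h2 ⊢
    linarith
  have hfloor : ∀ k : ℤ, 1 ≤ k → k ≤ n →
      ((⌊((k * N : ℤ) : ℝ) * r⌋ : ℤ) : ℝ) = (k : ℝ) * N * r - k * g := by
    intro k hk1 hkn
    have h1 := hfract k hk1 hkn
    have h2 : Int.fract (((k * N : ℤ) : ℝ) * r) = ((k * N : ℤ) : ℝ) * r - ⌊((k * N : ℤ) : ℝ) * r⌋ := rfl
    push_cast at h1 h2 ⊢
    linarith
  have hdiff : ∀ i j : Fin n, i < j →
      a j - a i = ⌊((((j : ℤ) - i) * N : ℤ) : ℝ) * r⌋ := by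
    intro i j hij
    have hk1 : 1 ≤ (j : ℤ) - i := by
      have : (i:ℕ) < (j:ℕ) := hij
      omega
    have hkn : (j : ℤ) - i ≤ n := by
      have := j.isLt; omega
    have h1 := hfloor ((j : ℤ) - i) hk1 hkn
    have h2 : ((a j - a i : ℤ) : ℝ) = ((⌊((((j : ℤ) - i) * N : ℤ) : ℝ) * r⌋ : ℤ) : ℝ) := by
      push_cast [ha i, ha j]
      push_cast at h1
      linarith
    exact_mod_cast h2
  refine ⟨a, fun i j => ?_⟩
  constructor
  · rintro ⟨m, hm0, hm⟩
    by_contra hnot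
    rcases eq_or_lt_of_le (not_lt.1 hnot) with heq | hlt
    · -- j = i : a j - a i = 0, but 0 ∉ Pr
      have hji : a j = a i := by rw [Fin.le_antisymm (not_lt.1 hnot) (heq ▸ le_refl _)]
      rw [hji, sub_self] at hm
      rcases hm0.lt_or_gt with hmneg | hmpos
      · have hm1 : m ≤ -1 := by omega
        have : ⌊(m : ℝ) * r⌋ < 0 := Int.floor_lt.2 (by
          have h5 : (m:ℝ) ≤ -1 := by exact_mod_cast hm1
          push_cast; nlinarith)
        omega
      · have : 1 ≤ ⌊(m : ℝ) * r⌋ := Int.le_floor.2 (by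
          have : (1:ℝ) ≤ (m:ℝ) := by exact_mod_cast hmpos
          push_cast; nlinarith)
        omega
    · -- j < i
      set k : ℤ := (i : ℤ) - j with hk_def
      have hk1 : 1 ≤ k := by
        have : (j:ℕ) < (i:ℕ) := hlt
        omega
      have hkn : k ≤ n := by have := i.isLt; omega
      have hD := hdiff j i hlt
      set D : ℤ := ⌊((k * N : ℤ) : ℝ) * r⌋ with hD_def
      have hmD : ⌊(m : ℝ) * r⌋ = -D := by omega
      have hkN1 : (1:ℝ) ≤ (k:ℝ) * N := by
        have h1 : (1:ℝ) ≤ (k:ℝ) := by exact_mod_cast hk1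
        have h2 : (1:ℝ) ≤ (N:ℝ) := by exact_mod_cast hN0
        nlinarith
      have hD1 : 1 ≤ D := Int.le_floor.2 (by push_cast; nlinarith)
      have hmneg : m ≤ -1 := by
        rcases hm0.lt_or_gt with h | h
        · omega
        · exfalso
          have : 1 ≤ ⌊(m : ℝ) * r⌋ := Int.le_floor.2 (by
            have : (1:ℝ) ≤ (m:ℝ) := by exact_mod_cast h
            push_cast; nlinarith)
          omega
      set l : ℤ := -m with hl_def
      have hl1 : 1 ≤ l := by omega
      have hceil : ⌈((l : ℤ) : ℝ) * r⌉ = D := by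
        have hml : ((m : ℤ) : ℝ) * r = -(((l : ℤ) : ℝ) * r) := by
          push_cast [hl_def]; ring
        rw [hml, Int.floor_neg] at hmD
        omega
      have hirrl : Irrational (((l : ℤ) : ℝ) * r) := hr.intCast_mul (by omega)
      set x : ℝ := ((l : ℤ) : ℝ) * r with hx_def
      have hfloorl : ⌊x⌋ = D - 1 := by
        have h1 : (⌊x⌋:ℝ) < x := lt_of_le_of_ne (Int.floor_le x) fun hh => (hirrl.ne_int ⌊x⌋) hh.symm
        have h2 : ⌈x⌉ ≤ ⌊x⌋ + 1 := Int.ceil_le.2 (by push_cast; linarith [Int.lt_floor_add_one x])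
        have h3 : (⌊x⌋:ℝ) < (⌈x⌉:ℝ) := lt_of_lt_of_le h1 (Int.le_ceil x)
        have h4 : ⌊x⌋ < ⌈x⌉ := by exact_mod_cast h3
        omega
      set Fx : ℝ := Int.fract x with hFx_def
      have hFx0 : 0 ≤ Fx := Int.fract_nonneg x
      have hFx1 : Fx < 1 := Int.fract_lt_one x
      have hxval : x = ((D:ℝ) - 1) + Fx := by
        have : Fx = x - ⌊x⌋ := rfl
        rw [hfloorl] at this
        push_cast at this
        linarith
      have hyval : ((k * N : ℤ) : ℝ) * r = (D:ℝ) + (k:ℝ) * g := by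
        have := hfloor k hk1 hkn
        rw [← hD_def] at this
        push_cast at this ⊢
        linarith
      set e : ℤ := k * N - l with he_def
      have her : (e : ℝ) * r = 1 + (k:ℝ) * g - Fx := by
        have : ((k * N : ℤ) : ℝ) * r - x = (e:ℝ) * r := by
          rw [hx_def, he_def]; push_cast; ring
        rw [← this, hyval, hxval]; ring
      have hkg : (k:ℝ) * g < Int.fract r := hgltfr k hk1 hkn
      have hkgpos : 0 < (k:ℝ) * g := by
        have : (0:ℝ) < (k:ℝ) := by exact_mod_cast hk1
        exact mul_pos this hg0
      have he1 : 1 ≤ e := by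
        by_contra hcon
        push_neg at hcon
        have h4 : (e:ℝ) ≤ 0 := by exact_mod_cast (by omega : e ≤ 0)
        have h5 : (e:ℝ) * r ≤ 0 * r := mul_le_mul_of_nonneg_right h4 (le_of_lt hr0)
        rw [zero_mul] at h5
        linarith
      have he_eq : e = 1 := by
        by_contra hcon
        have h2 : 2 ≤ e := by omega
        have h4 : (2:ℝ) ≤ (e:ℝ) := by exact_mod_cast h2
        have h5 : (2:ℝ) * r ≤ (e:ℝ) * r := mul_le_mul_of_nonneg_right h4 (le_of_lt hr0)
        linarith
      rw [he_eq] at her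
      push_cast at her
      -- r = 1 + k*g - Fx, with r < 2
      have hrlt2 : r < 2 := by linarith
      have hfloorr : ⌊r⌋ = 1 := by
        rw [Int.floor_eq_iff]
        constructor <;> push_cast <;> linarith
      have hfrr : Int.fract r = r - 1 := by
        have : Int.fract r = r - ⌊r⌋ := rfl
        rw [hfloorr] at this
        push_cast at this
        linarith
      linarith
  · intro hij
    refine ⟨((j : ℤ) - i) * N, ?_, ?_⟩
    · have hk1 : 1 ≤ (j : ℤ) - i := by
        have : (i:ℕ) < (j:ℕ) := hij
        omega
      have : (0:ℤ) < N := by exact_mod_cast hN0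
      positivity
    · rw [hdiff i j hij]
end
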